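/- (Proposition 2, g-part.) In the travelling-wave Bäcklund setup with b'(α) = (λ w' + sin w)/(λ w' − sin w), K ∈ ℝ, B(α,β) = c(β + b(α) + K) and δ = f/(ak²) + (c/(ak)) tanh B, define g(α,β) := 4c²k³a(α)(1 − tanh² B) / ( k⁴ a(α)² + f(α)² + 2ck f(α) tanh B + c²k² tanh² B ), assuming the denominator never vanishes. Then g satisfies g_α = g · [ (1 − δ²)(λ² + k cos w) + 2kδ sin w ] / (2kλ(δ² + 1)) and g_β = g · [ (1 − δ²)(λ² − k cos w) − 2kδ sin w ] / (2kλ(δ² + 1)), where w is evaluated at α. -/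

import Mathlib

lemma hasDerivAt_tanh' (x : ℝ) : HasDerivAt Real.tanh (1 - Real.tanh x ^ 2) x := by
  have hc : Real.cosh x ≠ 0 := (Real.cosh_pos x).ne'
  have h := (Real.hasDerivAt_sinh x).div (Real.hasDerivAt_cosh x) hc
  have heq : (fun y => Real.sinh y / Real.cosh y) = Real.tanh := by
    funext y; rw [Real.tanh_eq_sinh_div_cosh]
  have heq' : (Real.sinh / Real.cosh) = Real.tanh := heq
  rw [heq'] at h
  refine h.congr_deriv ?_
  rw [Real.tanh_eq_sinh_div_cosh]
  field_simp



/-- First partial derivative (w.r.t. the first variable) of a curried function of two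
real variables. -/
noncomputable def pd1 (f : ℝ → ℝ → ℝ) (x y : ℝ) : ℝ := deriv (fun x' => f x' y) x

/-- Second partial derivative (w.r.t. the second variable). -/
noncomputable def pd2 (f : ℝ → ℝ → ℝ) (x y : ℝ) : ℝ := deriv (fun y' => f x y') y

set_option maxHeartbeats 4000000 in
/-- Proposition 2 (g-part): in the travelling-wave Bäcklund setup, the closed-form
expression `g = 4c²k³a(1 − tanh²B)/(k⁴a² + f² + 2ckf tanh B + c²k² tanh²B)` satisfies
`g_α = g[(1 − δ²)(λ² + k cos w) + 2kδ sin w]/(2kλ(δ² + 1))` and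
`g_β = g[(1 − δ²)(λ² − k cos w) − 2kδ sin w]/(2kλ(δ² + 1))`. -/
theorem associated_potential_g (k lam l K : ℝ) (hk : k ≠ 0) (hlam : lam ≠ 0)
    (w : ℝ → ℝ) (hw : Differentiable ℝ w) (hw' : Differentiable ℝ (deriv w))
    (hode : ∀ α : ℝ, k * deriv (deriv w) α = Real.sin (w α))
    (hfi : ∀ α : ℝ, k * (deriv w α) ^ 2 = 2 * l - 2 * Real.cos (w α))
    (hdisc : lam ^ 4 - 2 * k * l * lam ^ 2 + k ^ 2 > 0)
    (a f : ℝ → ℝ) (c : ℝ)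
    (ha : ∀ α : ℝ, a α = Real.sin (w α) / (4 * k * lam) - deriv w α / (4 * k))
    (hf : ∀ α : ℝ, f α = lam / 4 - k * Real.cos (w α) / (4 * lam))
    (hc : c = Real.sqrt (lam ^ 4 - 2 * k * l * lam ^ 2 + k ^ 2) / (4 * k * lam))
    (ha0 : ∀ α : ℝ, a α ≠ 0)
    (hne : ∀ α : ℝ, lam * deriv w α - Real.sin (w α) ≠ 0)
    (b : ℝ → ℝ) (hb : Differentiable ℝ b)
    (hb' : ∀ α : ℝ, deriv b α
      = (lam * deriv w α + Real.sin (w α)) / (lam * deriv w α - Real.sin (w α)))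
    (B : ℝ → ℝ → ℝ) (hB : ∀ α β : ℝ, B α β = c * (β + b α + K))
    (δ : ℝ → ℝ → ℝ)
    (hδ : ∀ α β : ℝ, δ α β
      = f α / (a α * k ^ 2) + (c / (a α * k)) * Real.tanh (B α β))
    (hden : ∀ α β : ℝ,
      k ^ 4 * (a α) ^ 2 + (f α) ^ 2 + 2 * c * k * f α * Real.tanh (B α β)
        + c ^ 2 * k ^ 2 * (Real.tanh (B α β)) ^ 2 ≠ 0)
    (g : ℝ → ℝ → ℝ)
    (hg : ∀ α β : ℝ, g α β
      = 4 * c ^ 2 * k ^ 3 * a α * (1 - (Real.tanh (B α β)) ^ 2)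
        / (k ^ 4 * (a α) ^ 2 + (f α) ^ 2 + 2 * c * k * f α * Real.tanh (B α β)
            + c ^ 2 * k ^ 2 * (Real.tanh (B α β)) ^ 2)) :
    ∀ α β : ℝ,
      pd1 g α β = g α β
        * ((1 - (δ α β) ^ 2) * (lam ^ 2 + k * Real.cos (w α))
            + 2 * k * δ α β * Real.sin (w α))
        / (2 * k * lam * ((δ α β) ^ 2 + 1)) ∧
      pd2 g α β = g α β
        * ((1 - (δ α β) ^ 2) * (lam ^ 2 - k * Real.cos (w α))
            - 2 * k * δ α β * Real.sin (w α))
        / (2 * k * lam * ((δ α β) ^ 2 + 1)) := by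
  intro α β
  have hA0 : a α ≠ 0 := ha0 α
  have hDval : (k ^ 4 * (a α) ^ 2 + (f α) ^ 2 + 2 * c * k * f α * Real.tanh (B α β) + c ^ 2 * k ^ 2 * (Real.tanh (B α β)) ^ 2) ≠ 0 := hden α β
  have hT' : Real.tanh (c * (β + b α + K)) = Real.tanh (B α β) := by rw [hB]
  -- basic algebraic facts
  have hsc : (Real.sin (w α)) ^ 2 + (Real.cos (w α)) ^ 2 = 1 := Real.sin_sq_add_cos_sq (w α)
  have hfiα : k * (deriv w α) ^ 2 = 2 * l - 2 * Real.cos (w α) := hfi α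
  have hQe : k * (deriv (deriv w) α) = Real.sin (w α) := hode α
  have hc2 : 16 * k ^ 2 * lam ^ 2 * c ^ 2 = lam ^ 4 - 2 * k * l * lam ^ 2 + k ^ 2 := by
    rw [hc, div_pow, Real.sq_sqrt hdisc.le]
    field_simp
    ring
  have h5 : 4 * k * lam * a α = Real.sin (w α) - lam * deriv w α := by
    rw [ha α]; field_simp
  have h6 : 4 * lam * (f α) = lam ^ 2 - k * Real.cos (w α) := by
    rw [hf α]; field_simp
  have hRe : (deriv b α) * (lam * deriv w α - Real.sin (w α)) = lam * deriv w α + Real.sin (w α) := by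
    rw [hb' α]; exact div_mul_cancel₀ _ (hne α)
  have h_a2 : 4 * k * lam * (Real.cos (w α) * deriv w α / (4 * k * lam) - deriv (deriv w) α / (4 * k)) = Real.cos (w α) * deriv w α - lam * (deriv (deriv w) α) := by
    field_simp
  have h_f2 : 4 * lam * (k * Real.sin (w α) * deriv w α / (4 * lam)) = k * Real.sin (w α) * deriv w α := by
    field_simp
  have h5sq : 16 * k ^ 2 * lam ^ 2 * (a α) ^ 2 = (Real.sin (w α) - lam * deriv w α) ^ 2 := by
    linear_combination (4 * k * lam * a α + Real.sin (w α) - lam * deriv w α) * h5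
  have h6sq : 16 * lam ^ 2 * (f α) ^ 2 = (lam ^ 2 - k * Real.cos (w α)) ^ 2 := by
    linear_combination (4 * lam * (f α) + lam ^ 2 - k * Real.cos (w α)) * h6
  have K1big : 16 * lam ^ 2 * (k ^ 4 * (a α) ^ 2 - (f α) ^ 2 + c ^ 2 * k ^ 2) = 8 * lam * (a α * k ^ 3 * Real.sin (w α)) := by
    linear_combination k ^ 2 * h5sq - h6sq + hc2 - 2 * k ^ 2 * Real.sin (w α) * h5
      - k ^ 2 * hsc + k * lam ^ 2 * hfiα
  have h8lam : (8 * lam : ℝ) ≠ 0 := mul_ne_zero (by norm_num) hlam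
  have h16kl2 : (16 * k * lam ^ 2 : ℝ) ≠ 0 :=
    mul_ne_zero (mul_ne_zero (by norm_num) hk) (pow_ne_zero 2 hlam)
  have K1c : 2 * lam * (k ^ 4 * (a α) ^ 2 - (f α) ^ 2 + c ^ 2 * k ^ 2) = a α * k ^ 3 * Real.sin (w α) :=
    mul_left_cancel₀ h8lam (by linear_combination K1big)
  have L1CC : 32 * k * lam ^ 3 * (k * (Real.cos (w α) * deriv w α / (4 * k * lam) - deriv (deriv w) α / (4 * k)) - 2 * (deriv b α) * (f α) * (a α))
      = -(16 * k * lam ^ 2 * (lam ^ 2 + k * Real.cos (w α)) * (a α)) := by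
    linear_combination 8 * k * lam ^ 2 * h_a2 - 8 * lam ^ 3 * hQe
      - 16 * k * lam ^ 2 * (deriv b α) * (a α) * h6
      + (4 * lam * (lam ^ 2 + k * Real.cos (w α)) - 4 * lam * (deriv b α) * (lam ^ 2 - k * Real.cos (w α))) * h5
      + 4 * lam * (lam ^ 2 - k * Real.cos (w α)) * hRe
  have L1c : 2 * lam * (k * (Real.cos (w α) * deriv w α / (4 * k * lam) - deriv (deriv w) α / (4 * k)) - 2 * (deriv b α) * (f α) * (a α))
      = -((lam ^ 2 + k * Real.cos (w α)) * (a α)) :=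
    mul_left_cancel₀ h16kl2 (by linear_combination L1CC)
  have L2CC : 32 * k * lam ^ 3 * (-(2 * k * (k * Real.sin (w α) * deriv w α / (4 * lam))) - 2 * (deriv b α) * (k ^ 4 * (a α) ^ 2 - (f α) ^ 2 + c ^ 2 * k ^ 2))
      = 32 * (a α) * k ^ 4 * lam ^ 2 * Real.sin (w α) := by
    linear_combination (-(16 * k ^ 2 * lam ^ 2)) * h_f2 - 4 * k * lam * (deriv b α) * K1big
      - 8 * k ^ 3 * lam * Real.sin (w α) * ((deriv b α) + 1) * h5 + 8 * k ^ 3 * lam * Real.sin (w α) * hRe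
  have L2c : 2 * lam * (-(2 * k * (k * Real.sin (w α) * deriv w α / (4 * lam))) - 2 * (deriv b α) * (k ^ 4 * (a α) ^ 2 - (f α) ^ 2 + c ^ 2 * k ^ 2))
      = 2 * (a α) * k ^ 3 * Real.sin (w α) :=
    mul_left_cancel₀ h16kl2 (by linear_combination L2CC)
  have CL : 2 * k * lam * ((k * (Real.cos (w α) * deriv w α / (4 * k * lam) - deriv (deriv w) α / (4 * k)) - 2 * (a α) * c * (Real.tanh (B α β)) * (deriv b α) * k) * (k ^ 4 * (a α) ^ 2 + (f α) ^ 2 + 2 * c * k * f α * Real.tanh (B α β) + c ^ 2 * k ^ 2 * (Real.tanh (B α β)) ^ 2)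
        - (a α) * k * (2 * k ^ 4 * a α * (Real.cos (w α) * deriv w α / (4 * k * lam) - deriv (deriv w) α / (4 * k)) + 2 * (k * Real.sin (w α) * deriv w α / (4 * lam)) * (f α + c * k * Real.tanh (B α β)) + 2 * c ^ 2 * k * (f α + c * k * Real.tanh (B α β)) * deriv b α * (1 - (Real.tanh (B α β)) ^ 2)))
      = (a α) * k * ((a α ^ 2 * k ^ 4 - (f α + c * k * Real.tanh (B α β)) ^ 2) * (lam ^ 2 + k * Real.cos (w α)) + 2 * a α * k ^ 3 * (f α + c * k * Real.tanh (B α β)) * Real.sin (w α)) := by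
    linear_combination k * ((f α + c * k * Real.tanh (B α β)) ^ 2 - k ^ 4 * (a α) ^ 2) * L1c + k * (a α) * (f α + c * k * Real.tanh (B α β)) * L2c
  have CLb : 2 * k * lam * (-(2 * c * (Real.tanh (B α β)) * (k ^ 4 * (a α) ^ 2 + (f α) ^ 2 + 2 * c * k * f α * Real.tanh (B α β) + c ^ 2 * k ^ 2 * (Real.tanh (B α β)) ^ 2)) - 2 * c ^ 2 * k * (1 - (Real.tanh (B α β)) ^ 2) * (f α + c * k * Real.tanh (B α β)))
      = ((a α ^ 2 * k ^ 4 - (f α + c * k * Real.tanh (B α β)) ^ 2) * (lam ^ 2 - k * Real.cos (w α)) - 2 * a α * k ^ 3 * (f α + c * k * Real.tanh (B α β)) * Real.sin (w α)) := by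
    linear_combination (-(2 * (f α + c * k * Real.tanh (B α β)))) * K1c + (a α ^ 2 * k ^ 4 - (f α + c * k * Real.tanh (B α β)) ^ 2) * h6
  -- delta facts
  have hδv : δ α β = (f α + c * k * Real.tanh (B α β)) / (a α * k ^ 2) := by
    rw [hδ α β]; field_simp
  have hδ1 : (δ α β) ^ 2 + 1 = (k ^ 4 * (a α) ^ 2 + (f α) ^ 2 + 2 * c * k * f α * Real.tanh (B α β) + c ^ 2 * k ^ 2 * (Real.tanh (B α β)) ^ 2) / ((a α) ^ 2 * k ^ 4) := by
    rw [hδv]; field_simp; ring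
  -- nonvanishing
  have hD2 : (k ^ 4 * (a α) ^ 2 + (f α) ^ 2 + 2 * c * k * f α * Real.tanh (B α β) + c ^ 2 * k ^ 2 * (Real.tanh (B α β)) ^ 2) ^ 2 ≠ 0 := pow_ne_zero 2 hDval
  have hY2 : 2 * k * lam * (k ^ 4 * (a α) ^ 2 + (f α) ^ 2 + 2 * c * k * f α * Real.tanh (B α β) + c ^ 2 * k ^ 2 * (Real.tanh (B α β)) ^ 2) ^ 2 ≠ 0 :=
    mul_ne_zero (mul_ne_zero (mul_ne_zero two_ne_zero hk) hlam) hD2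
  -- closed forms of the right-hand sides
  have hR1 : g α β * ((1 - (δ α β) ^ 2) * (lam ^ 2 + k * Real.cos (w α)) + 2 * k * δ α β * Real.sin (w α)) / (2 * k * lam * ((δ α β) ^ 2 + 1)) = (4 * c ^ 2 * k ^ 3 * a α * (1 - (Real.tanh (B α β)) ^ 2)) * ((a α ^ 2 * k ^ 4 - (f α + c * k * Real.tanh (B α β)) ^ 2) * (lam ^ 2 + k * Real.cos (w α)) + 2 * a α * k ^ 3 * (f α + c * k * Real.tanh (B α β)) * Real.sin (w α)) / (2 * k * lam * (k ^ 4 * (a α) ^ 2 + (f α) ^ 2 + 2 * c * k * f α * Real.tanh (B α β) + c ^ 2 * k ^ 2 * (Real.tanh (B α β)) ^ 2) ^ 2) := by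
    rw [hg α β, hδ1, hδv]
    field_simp
  have hR2 : g α β * ((1 - (δ α β) ^ 2) * (lam ^ 2 - k * Real.cos (w α)) - 2 * k * δ α β * Real.sin (w α)) / (2 * k * lam * ((δ α β) ^ 2 + 1)) = (4 * c ^ 2 * k ^ 3 * a α * (1 - (Real.tanh (B α β)) ^ 2)) * ((a α ^ 2 * k ^ 4 - (f α + c * k * Real.tanh (B α β)) ^ 2) * (lam ^ 2 - k * Real.cos (w α)) - 2 * a α * k ^ 3 * (f α + c * k * Real.tanh (B α β)) * Real.sin (w α)) / (2 * k * lam * (k ^ 4 * (a α) ^ 2 + (f α) ^ 2 + 2 * c * k * f α * Real.tanh (B α β) + c ^ 2 * k ^ 2 * (Real.tanh (B α β)) ^ 2) ^ 2) := by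
    rw [hg α β, hδ1, hδv]
    field_simp
  -- derivative of a
  have hA' : HasDerivAt a (Real.cos (w α) * deriv w α / (4 * k * lam) - deriv (deriv w) α / (4 * k)) α := by
    have h1 : HasDerivAt (fun x => Real.sin (w x) / (4 * k * lam) - deriv w x / (4 * k))
        (Real.cos (w α) * deriv w α / (4 * k * lam) - deriv (deriv w) α / (4 * k)) α :=
      (((hw.differentiableAt.hasDerivAt).sin).div_const _).sub
        ((hw'.differentiableAt.hasDerivAt).div_const _)
    have heq : a = fun x => Real.sin (w x) / (4 * k * lam) - deriv w x / (4 * k) := funext ha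
    rw [heq]; exact h1
  -- derivative of f
  have hF' : HasDerivAt f (k * Real.sin (w α) * deriv w α / (4 * lam)) α := by
    have h1 : HasDerivAt (fun x => lam / 4 - k * Real.cos (w x) / (4 * lam))
        (0 - k * (-Real.sin (w α) * deriv w α) / (4 * lam)) α :=
      (hasDerivAt_const _ _).sub
        (((hw.differentiableAt.hasDerivAt).cos.const_mul k).div_const _)
    have h2 : f = fun x => lam / 4 - k * Real.cos (w x) / (4 * lam) := funext hf
    rw [h2]
    convert h1 using 1; ring
  -- derivative of tanh (B x β) in x
  have hTα : HasDerivAt (fun x => Real.tanh (c * (β + b x + K)))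
      ((1 - (Real.tanh (B α β)) ^ 2) * (c * (deriv b α))) α := by
    have hBα : HasDerivAt (fun x => c * (β + b x + K)) (c * (deriv b α)) α := by
      have h1 : HasDerivAt (fun x => β + b x + K) (deriv b α) α := by
        simpa using ((hb.differentiableAt.hasDerivAt.const_add β).add_const K)
      simpa using h1.const_mul c
    have h2 := (hasDerivAt_tanh' (c * (β + b α + K))).comp α hBα
    rw [hT'] at h2; exact h2
  -- numerator and denominator, α-direction
  have hNumα : HasDerivAt
      (fun x => 4 * c ^ 2 * k ^ 3 * a x * (1 - Real.tanh (c * (β + b x + K)) ^ 2))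
      ((4 * c ^ 2 * k ^ 3 * (Real.cos (w α) * deriv w α / (4 * k * lam) - deriv (deriv w) α / (4 * k))) * (1 - (Real.tanh (B α β)) ^ 2) + (4 * c ^ 2 * k ^ 3 * a α) * (0 - 2 * Real.tanh (B α β) * ((1 - (Real.tanh (B α β)) ^ 2) * (c * deriv b α)))) α := by
    have h1 : HasDerivAt (fun x => 4 * c ^ 2 * k ^ 3 * a x)
        (4 * c ^ 2 * k ^ 3 * (Real.cos (w α) * deriv w α / (4 * k * lam) - deriv (deriv w) α / (4 * k))) α := hA'.const_mul _
    have h2 : HasDerivAt (fun x => 1 - Real.tanh (c * (β + b x + K)) ^ 2)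
        (0 - 2 * (Real.tanh (B α β)) * ((1 - (Real.tanh (B α β)) ^ 2) * (c * (deriv b α)))) α := by
      have h2' : HasDerivAt (fun x => Real.tanh (c * (β + b x + K)) ^ 2)
          (2 * (Real.tanh (B α β)) * ((1 - (Real.tanh (B α β)) ^ 2) * (c * (deriv b α)))) α := by
        have := hTα.pow 2
        norm_num [hT'] at this
        exact this.congr_deriv (by ring)
      exact (hasDerivAt_const _ _).sub h2'
    have h3 := h1.mul h2
    simp only [hT'] at h3; exact h3
  have hDenα : HasDerivAt
      (fun x => k ^ 4 * (a x) ^ 2 + (f x) ^ 2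
        + 2 * c * k * f x * Real.tanh (c * (β + b x + K))
        + c ^ 2 * k ^ 2 * Real.tanh (c * (β + b x + K)) ^ 2)
      (k ^ 4 * (2 * a α * (Real.cos (w α) * deriv w α / (4 * k * lam) - deriv (deriv w) α / (4 * k))) + 2 * f α * (k * Real.sin (w α) * deriv w α / (4 * lam)) + ((2 * c * k * (k * Real.sin (w α) * deriv w α / (4 * lam))) * Real.tanh (B α β) + (2 * c * k * f α) * ((1 - (Real.tanh (B α β)) ^ 2) * (c * deriv b α))) + c ^ 2 * k ^ 2 * (2 * Real.tanh (B α β) * ((1 - (Real.tanh (B α β)) ^ 2) * (c * deriv b α)))) α := by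
    have h1 : HasDerivAt (fun x => k ^ 4 * (a x) ^ 2)
        (k ^ 4 * (2 * a α * (Real.cos (w α) * deriv w α / (4 * k * lam) - deriv (deriv w) α / (4 * k)))) α := by
      have := (hA'.pow 2).const_mul (k ^ 4)
      norm_num at this
      exact this.congr_deriv (by ring)
    have h2 : HasDerivAt (fun x => (f x) ^ 2) (2 * f α * (k * Real.sin (w α) * deriv w α / (4 * lam))) α := by
      have := hF'.pow 2
      norm_num at this
      exact this.congr_deriv (by ring)
    have h3 : HasDerivAt (fun x => 2 * c * k * f x * Real.tanh (c * (β + b x + K)))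
        ((2 * c * k * (k * Real.sin (w α) * deriv w α / (4 * lam))) * Real.tanh (B α β) + (2 * c * k * f α) * ((1 - (Real.tanh (B α β)) ^ 2) * (c * (deriv b α)))) α := by
      have := (hF'.const_mul (2 * c * k)).mul hTα
      simp only [hT'] at this; exact this
    have h4 : HasDerivAt (fun x => c ^ 2 * k ^ 2 * Real.tanh (c * (β + b x + K)) ^ 2)
        (c ^ 2 * k ^ 2 * (2 * (Real.tanh (B α β)) * ((1 - (Real.tanh (B α β)) ^ 2) * (c * (deriv b α))))) α := by
      have := (hTα.pow 2).const_mul (c ^ 2 * k ^ 2)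
      norm_num [hT'] at this
      exact this.congr_deriv (by ring)
    exact ((h1.add h2).add h3).add h4
  have hgfunα : (fun x => g x β)
      = (fun x => 4 * c ^ 2 * k ^ 3 * a x * (1 - Real.tanh (c * (β + b x + K)) ^ 2)
        / (k ^ 4 * (a x) ^ 2 + (f x) ^ 2
            + 2 * c * k * f x * Real.tanh (c * (β + b x + K))
            + c ^ 2 * k ^ 2 * Real.tanh (c * (β + b x + K)) ^ 2)) := by
    funext x; rw [hg x β, hB x β]
  have hdenα0 : k ^ 4 * (a α) ^ 2 + (f α) ^ 2
      + 2 * c * k * f α * Real.tanh (c * (β + b α + K))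
      + c ^ 2 * k ^ 2 * Real.tanh (c * (β + b α + K)) ^ 2 ≠ 0 := by
    rw [hT']; exact hDval
  have HDIVα := (hNumα.div hDenα hdenα0).deriv
  rw [hT'] at HDIVα
  have HD1 : pd1 g α β = (((4 * c ^ 2 * k ^ 3 * (Real.cos (w α) * deriv w α / (4 * k * lam) - deriv (deriv w) α / (4 * k))) * (1 - (Real.tanh (B α β)) ^ 2) + (4 * c ^ 2 * k ^ 3 * a α) * (0 - 2 * Real.tanh (B α β) * ((1 - (Real.tanh (B α β)) ^ 2) * (c * deriv b α)))) * (k ^ 4 * (a α) ^ 2 + (f α) ^ 2 + 2 * c * k * f α * Real.tanh (B α β) + c ^ 2 * k ^ 2 * (Real.tanh (B α β)) ^ 2) - (4 * c ^ 2 * k ^ 3 * a α * (1 - (Real.tanh (B α β)) ^ 2)) * (k ^ 4 * (2 * a α * (Real.cos (w α) * deriv w α / (4 * k * lam) - deriv (deriv w) α / (4 * k))) + 2 * f α * (k * Real.sin (w α) * deriv w α / (4 * lam)) + ((2 * c * k * (k * Real.sin (w α) * deriv w α / (4 * lam))) * Real.tanh (B α β) + (2 * c * k * f α) * ((1 - (Real.tanh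 (B α β)) ^ 2) * (c * deriv b α))) + c ^ 2 * k ^ 2 * (2 * Real.tanh (B α β) * ((1 - (Real.tanh (B α β)) ^ 2) * (c * deriv b α))))) / (k ^ 4 * (a α) ^ 2 + (f α) ^ 2 + 2 * c * k * f α * Real.tanh (B α β) + c ^ 2 * k ^ 2 * (Real.tanh (B α β)) ^ 2) ^ 2 := by
    show deriv (fun x' => g x' β) α = _
    rw [hgfunα]
    exact HDIVα
  -- β-direction
  have hTβ : HasDerivAt (fun y => Real.tanh (c * (y + b α + K)))
      ((1 - (Real.tanh (B α β)) ^ 2) * (c * 1)) β := by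
    have hBβ : HasDerivAt (fun y => c * (y + b α + K)) (c * 1) β := by
      have h1 : HasDerivAt (fun y : ℝ => y + b α + K) 1 β := by
        simpa using ((hasDerivAt_id β).add_const (b α)).add_const K
      exact h1.const_mul c
    have h2 := (hasDerivAt_tanh' (c * (β + b α + K))).comp β hBβ
    rw [hT'] at h2; exact h2
  have hNumβ : HasDerivAt
      (fun y => 4 * c ^ 2 * k ^ 3 * a α * (1 - Real.tanh (c * (y + b α + K)) ^ 2))
      (4 * c ^ 2 * k ^ 3 * a α * (0 - 2 * Real.tanh (B α β) * ((1 - (Real.tanh (B α β)) ^ 2) * (c * 1)))) β := by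
    have h2 : HasDerivAt (fun y => 1 - Real.tanh (c * (y + b α + K)) ^ 2)
        (0 - 2 * (Real.tanh (B α β)) * ((1 - (Real.tanh (B α β)) ^ 2) * (c * 1))) β := by
      have h2' : HasDerivAt (fun y => Real.tanh (c * (y + b α + K)) ^ 2)
          (2 * (Real.tanh (B α β)) * ((1 - (Real.tanh (B α β)) ^ 2) * (c * 1))) β := by
        have := hTβ.pow 2
        norm_num [hT'] at this
        exact this.congr_deriv (by ring)
      exact (hasDerivAt_const _ _).sub h2'
    have h3 := h2.const_mul (4 * c ^ 2 * k ^ 3 * a α)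
    convert h3 using 1 <;> ring
  have hDenβ : HasDerivAt
      (fun y => k ^ 4 * (a α) ^ 2 + (f α) ^ 2
        + 2 * c * k * f α * Real.tanh (c * (y + b α + K))
        + c ^ 2 * k ^ 2 * Real.tanh (c * (y + b α + K)) ^ 2)
      ((2 * c * k * f α) * ((1 - (Real.tanh (B α β)) ^ 2) * (c * 1)) + c ^ 2 * k ^ 2 * (2 * Real.tanh (B α β) * ((1 - (Real.tanh (B α β)) ^ 2) * (c * 1)))) β := by
    have h3 : HasDerivAt (fun y => 2 * c * k * f α * Real.tanh (c * (y + b α + K)))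
        (2 * c * k * f α * ((1 - (Real.tanh (B α β)) ^ 2) * (c * 1))) β := hTβ.const_mul _
    have h4 : HasDerivAt (fun y => c ^ 2 * k ^ 2 * Real.tanh (c * (y + b α + K)) ^ 2)
        (c ^ 2 * k ^ 2 * (2 * (Real.tanh (B α β)) * ((1 - (Real.tanh (B α β)) ^ 2) * (c * 1)))) β := by
      have := (hTβ.pow 2).const_mul (c ^ 2 * k ^ 2)
      norm_num [hT'] at this
      exact this.congr_deriv (by ring)
    have h12 : HasDerivAt (fun _ : ℝ => k ^ 4 * (a α) ^ 2 + (f α) ^ 2) 0 β :=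
      hasDerivAt_const _ _
    have := (h12.add h3).add h4
    exact this.congr_deriv (by ring)
  have hgfunβ : (fun y => g α y)
      = (fun y => 4 * c ^ 2 * k ^ 3 * a α * (1 - Real.tanh (c * (y + b α + K)) ^ 2)
        / (k ^ 4 * (a α) ^ 2 + (f α) ^ 2
            + 2 * c * k * f α * Real.tanh (c * (y + b α + K))
            + c ^ 2 * k ^ 2 * Real.tanh (c * (y + b α + K)) ^ 2)) := by
    funext y; rw [hg α y, hB α y]
  have HDIVβ := (hNumβ.div hDenβ hdenα0).deriv
  rw [hT'] at HDIVβ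
  have HD2 : pd2 g α β = ((4 * c ^ 2 * k ^ 3 * a α * (0 - 2 * Real.tanh (B α β) * ((1 - (Real.tanh (B α β)) ^ 2) * (c * 1)))) * (k ^ 4 * (a α) ^ 2 + (f α) ^ 2 + 2 * c * k * f α * Real.tanh (B α β) + c ^ 2 * k ^ 2 * (Real.tanh (B α β)) ^ 2) - (4 * c ^ 2 * k ^ 3 * a α * (1 - (Real.tanh (B α β)) ^ 2)) * ((2 * c * k * f α) * ((1 - (Real.tanh (B α β)) ^ 2) * (c * 1)) + c ^ 2 * k ^ 2 * (2 * Real.tanh (B α β) * ((1 - (Real.tanh (B α β)) ^ 2) * (c * 1))))) / (k ^ 4 * (a α) ^ 2 + (f α) ^ 2 + 2 * c * k * f α * Real.tanh (B α β) + c ^ 2 * k ^ 2 * (Real.tanh (B α β)) ^ 2) ^ 2 := by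
    show deriv (fun y' => g α y') β = _
    rw [hgfunβ]
    exact HDIVβ
  constructor
  · rw [HD1, hR1, div_eq_div_iff hD2 hY2]
    apply mul_left_cancel₀ hk
    linear_combination 4 * c ^ 2 * k ^ 3 * (1 - (Real.tanh (B α β)) ^ 2) * (k ^ 4 * (a α) ^ 2 + (f α) ^ 2 + 2 * c * k * f α * Real.tanh (B α β) + c ^ 2 * k ^ 2 * (Real.tanh (B α β)) ^ 2) ^ 2 * CL
  · rw [HD2, hR2, div_eq_div_iff hD2 hY2]
    linear_combination (4 * c ^ 2 * k ^ 3 * (a α) * (1 - (Real.tanh (B α β)) ^ 2)) * (k ^ 4 * (a α) ^ 2 + (f α) ^ 2 + 2 * c * k * f α * Real.tanh (B α β) + c ^ 2 * k ^ 2 * (Real.tanh (B α β)) ^ 2) ^ 2 * CLb
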